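/- arXiv:1311.3069 — 5 statements merged into one kernel-verified Lean document; each statement's English description precedes it below -/
import Mathlib

section
/- Let β_n < 0 and β₁, β₂ ∈ ℝ satisfy β₁ − β_n > 0, β₂ − β_n > 0 and β₁ + β₂ − β_n > 0, and let f, g : ℝ → ℝ be continuous with polynomial growth on (−∞,0]. Then the function τ ↦ e^{−β_n τ} · (∫_τ^0 e^{β₁(τ−τ′)} f(τ′) dτ′) · (∫_τ^0 e^{β₂(τ−τ′)} g(τ′) dτ′) is integrable on (−∞,0]. -/
open MeasureTheory Real intervalIntegral

open MeasureTheory Real intervalIntegral Set Filter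

/-- exp (b*x) is integrable on (-∞, 0] for b > 0. -/
lemma aux_exp_mul_integrableOn_Iic {b : ℝ} (hb : 0 < b) :
    IntegrableOn (fun x => Real.exp (b * x)) (Set.Iic (0:ℝ)) := by
  refine integrableOn_Iic_of_intervalIntegral_norm_bounded (1 / b) 0
    (fun y => ((Real.continuous_exp.comp (continuous_const.mul continuous_id)).integrableOn_Ioc))
    tendsto_id (Filter.Eventually.of_forall fun y => ?_)
  simp_rw [Real.norm_eq_abs, abs_of_nonneg (Real.exp_pos _).le]
  rw [intervalIntegral.integral_comp_mul_left (fun x => Real.exp x) hb.ne',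
    integral_exp, mul_zero, Real.exp_zero, smul_eq_mul, one_div]
  have h : (0:ℝ) ≤ Real.exp (b * id y) := (Real.exp_pos _).le
  have hbinv : (0:ℝ) < b⁻¹ := inv_pos.mpr hb
  nlinarith [mul_nonneg hbinv.le h]

lemma aux_tendsto {b : ℝ} (hb : 0 < b) (K : ℕ) :
    Tendsto (fun x : ℝ => Real.exp (-(b*x)) * (1+x)^K) atTop (nhds 0) := by
  have h1 : Tendsto (fun x : ℝ => b*(1+x)) atTop atTop := by
    apply Tendsto.const_mul_atTop hb
    exact tendsto_atTop_add_const_left _ 1 tendsto_id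
  have h2 := (Real.tendsto_pow_mul_exp_neg_atTop_nhds_zero K).comp h1
  have h3 := h2.const_mul (Real.exp b / b^K)
  rw [mul_zero] at h3
  refine h3.congr fun x => ?_
  simp only [Function.comp]
  rw [mul_pow, show -(b*(1+x)) = -b + -(b*x) by ring, Real.exp_add]
  rw [Real.exp_neg]
  field_simp [pow_ne_zero _ hb.ne']

lemma aux_G_integrable {c : ℝ} (hc : 0 < c) (K : ℕ) :
    IntegrableOn (fun τ => Real.exp (c*τ) * (1-τ)^K) (Set.Iic (0:ℝ)) := by
  have hcont : Continuous fun τ : ℝ => Real.exp (c*τ) * (1-τ)^K := by continuity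
  apply (hcont.locallyIntegrable.locallyIntegrableOn _).integrableOn_of_isBigO_atBot
    (g := fun x => Real.exp ((c/2) * x))
  · have htend : Tendsto (fun τ : ℝ => Real.exp ((c/2)*τ) * (1-τ)^K) atBot (nhds 0) := by
      have := (aux_tendsto (b := c/2) (by linarith) K).comp tendsto_neg_atBot_atTop
      refine this.congr fun τ => ?_
      simp only [Function.comp]
      ring_nf
    have hlo : (fun τ : ℝ => Real.exp (c*τ) * (1-τ)^K) =o[atBot]
        fun x => Real.exp ((c/2) * x) := by
      rw [Asymptotics.isLittleO_iff_tendsto (fun x hx => absurd hx (Real.exp_ne_zero _))]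
      refine htend.congr fun τ => ?_
      rw [eq_div_iff (Real.exp_ne_zero _), mul_right_comm, ← Real.exp_add]
      ring_nf
    exact hlo.isBigO
  · exact ⟨Set.Iic 0, Iic_mem_atBot 0, aux_exp_mul_integrableOn_Iic (by linarith)⟩

lemma aux_inner_bound (β C : ℝ) (hC : 0 < C) (k : ℕ) (f : ℝ → ℝ)
    (hf : ∀ x ≤ (0:ℝ), |f x| ≤ C * (1 + |x|) ^ k) {τ : ℝ} (hτ : τ ≤ 0) :
    |∫ τ' in τ..0, Real.exp (β * (τ - τ')) * f τ'| ≤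
      Real.exp (min β 0 * τ) * (C * (1-τ)^k) * (1-τ) := by
  have key : ∀ x ∈ Set.uIoc τ 0, ‖Real.exp (β * (τ - x)) * f x‖ ≤
      Real.exp (min β 0 * τ) * (C * (1-τ)^k) := by
    intro x hx
    rw [Set.uIoc_of_le hτ] at hx
    obtain ⟨hx1, hx2⟩ := hx
    rw [Real.norm_eq_abs, abs_mul, Real.abs_exp]
    have hfx : |f x| ≤ C * (1-τ)^k := by
      refine (hf x hx2).trans ?_
      refine mul_le_mul_of_nonneg_left (pow_le_pow_left₀ (by positivity) ?_ k) hC.le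
      rw [abs_of_nonpos hx2]; linarith
    have hexp : Real.exp (β * (τ - x)) ≤ Real.exp (min β 0 * τ) := by
      apply Real.exp_le_exp.mpr
      rcases le_or_gt β 0 with h | h
      · rw [min_eq_left h]; nlinarith
      · rw [min_eq_right h.le]; nlinarith
    exact mul_le_mul hexp hfx (abs_nonneg _) (Real.exp_pos _).le
  have h := intervalIntegral.norm_integral_le_of_norm_le_const key
  rw [Real.norm_eq_abs] at h
  refine h.trans ?_
  have habs : |0 - τ| = -τ := by rw [abs_of_nonneg (by linarith)]; ring
  rw [habs]
  have h1τ : (0:ℝ) ≤ 1 - τ := by linarith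
  have hnn : (0:ℝ) ≤ Real.exp (min β 0 * τ) * (C * (1-τ)^k) :=
    mul_nonneg (Real.exp_pos _).le (mul_nonneg hC.le (pow_nonneg h1τ k))
  exact mul_le_mul_of_nonneg_left (by linarith) hnn

lemma aux_cont_inner (β : ℝ) (f : ℝ → ℝ) (hf : Continuous f) :
    Continuous fun τ => ∫ τ' in τ..0, Real.exp (β * (τ - τ')) * f τ' := by
  have h1 : ∀ τ, (∫ τ' in τ..0, Real.exp (β * (τ - τ')) * f τ')
      = Real.exp (β * τ) * ∫ τ' in τ..0, Real.exp (-(β * τ')) * f τ' := by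
    intro τ
    rw [← intervalIntegral.integral_const_mul]
    apply intervalIntegral.integral_congr
    intro τ' _
    simp only []
    rw [← mul_assoc, ← Real.exp_add]
    ring_nf
  simp_rw [h1]
  refine Continuous.mul (by continuity) ?_
  have hcont : Continuous fun τ' => Real.exp (-(β * τ')) * f τ' := by continuity
  have h2 : Continuous fun τ => ∫ τ' in (0:ℝ)..τ, Real.exp (-(β * τ')) * f τ' :=
    intervalIntegral.continuous_primitive (fun a b => hcont.intervalIntegrable a b) 0
  have h3 := h2.neg
  refine h3.congr fun τ => ?_
  rw [Pi.neg_apply, ← intervalIntegral.integral_symm]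

/-- With `β_n < 0`, `β₁ - β_n > 0`, `β₂ - β_n > 0`, `β₁ + β₂ - β_n > 0`,
and `f, g` continuous of polynomial growth on `(-∞, 0]`, the function
`τ ↦ exp (-β_n τ) * (∫_τ^0 exp (β₁ (τ - τ')) f τ' dτ') * (∫_τ^0 exp (β₂ (τ - τ')) g τ' dτ')`
is integrable on `(-∞, 0]`. -/
theorem integrable_double_memory_kernel_of_polyGrowth
    (βn β₁ β₂ : ℝ) (hβn : βn < 0)
    (hgap₁ : 0 < β₁ - βn) (hgap₂ : 0 < β₂ - βn) (hgap₁₂ : 0 < β₁ + β₂ - βn)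
    (f g : ℝ → ℝ) (hf_cont : Continuous f) (hg_cont : Continuous g)
    (hf_growth : ∃ C > (0:ℝ), ∃ k : ℕ, ∀ τ ≤ (0:ℝ), |f τ| ≤ C * (1 + |τ|) ^ k)
    (hg_growth : ∃ C > (0:ℝ), ∃ k : ℕ, ∀ τ ≤ (0:ℝ), |g τ| ≤ C * (1 + |τ|) ^ k) :
    IntegrableOn
      (fun τ => Real.exp (-βn * τ) *
        (∫ τ' in τ..0, Real.exp (β₁ * (τ - τ')) * f τ') *
        (∫ τ' in τ..0, Real.exp (β₂ * (τ - τ')) * g τ'))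
      (Set.Iic 0) := by
  obtain ⟨C₁, hC₁, k₁, hf⟩ := hf_growth
  obtain ⟨C₂, hC₂, k₂, hg⟩ := hg_growth
  set m₁ := min β₁ 0 with hm₁
  set m₂ := min β₂ 0 with hm₂
  set c := -βn + m₁ + m₂ with hc
  have hcpos : 0 < c := by
    rcases min_cases β₁ 0 with ⟨e₁, h₁⟩ | ⟨e₁, h₁⟩ <;>
      rcases min_cases β₂ 0 with ⟨e₂, h₂⟩ | ⟨e₂, h₂⟩ <;>
      rw [hc, hm₁, hm₂, e₁, e₂] <;> linarith
  set K := k₁ + k₂ + 2 with hK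
  apply Integrable.mono'
    (g := fun τ => (C₁ * C₂) * (Real.exp (c * τ) * (1 - τ) ^ K))
  · exact ((aux_G_integrable hcpos K).const_mul _)
  · refine Continuous.aestronglyMeasurable ?_
    exact ((by continuity : Continuous fun τ : ℝ => Real.exp (-βn * τ)).mul
      (aux_cont_inner β₁ f hf_cont)).mul (aux_cont_inner β₂ g hg_cont)
  · rw [MeasureTheory.ae_restrict_iff' measurableSet_Iic]
    refine Filter.Eventually.of_forall fun τ hτ => ?_
    have hτ0 : τ ≤ (0:ℝ) := hτ
    have b₁ := aux_inner_bound β₁ C₁ hC₁ k₁ f hf hτ0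
    have b₂ := aux_inner_bound β₂ C₂ hC₂ k₂ g hg hτ0
    have h1τ : (0:ℝ) ≤ 1 - τ := by linarith
    have hB₁ : (0:ℝ) ≤ Real.exp (m₁ * τ) * (C₁ * (1-τ)^k₁) * (1-τ) := by
      have := (Real.exp_pos (m₁ * τ)).le
      have := pow_nonneg h1τ k₁
      positivity
    calc ‖Real.exp (-βn * τ) *
        (∫ τ' in τ..0, Real.exp (β₁ * (τ - τ')) * f τ') *
        (∫ τ' in τ..0, Real.exp (β₂ * (τ - τ')) * g τ')‖
        = Real.exp (-βn * τ) * |∫ τ' in τ..0, Real.exp (β₁ * (τ - τ')) * f τ'|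
            * |∫ τ' in τ..0, Real.exp (β₂ * (τ - τ')) * g τ'| := by
          rw [Real.norm_eq_abs, abs_mul, abs_mul, Real.abs_exp]
      _ ≤ Real.exp (-βn * τ) * (Real.exp (m₁ * τ) * (C₁ * (1-τ)^k₁) * (1-τ))
            * (Real.exp (m₂ * τ) * (C₂ * (1-τ)^k₂) * (1-τ)) := by
          refine mul_le_mul (mul_le_mul le_rfl b₁ (abs_nonneg _) (Real.exp_pos _).le)
            b₂ (abs_nonneg _) ?_
          exact mul_nonneg (Real.exp_pos _).le hB₁
      _ = (C₁ * C₂) * (Real.exp (c * τ) * (1 - τ) ^ K) := by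
          rw [hc, hK, show (-βn + m₁ + m₂) * τ = -βn * τ + (m₁ * τ + m₂ * τ) by ring,
            Real.exp_add, Real.exp_add, pow_add, pow_add]
          ring
end

section
/- Let β_n < 0 and β₁, β₂ ∈ ℝ satisfy β₁ + β₂ − β_n > 0, β₁ − β_n > 0 and β₂ − β_n > 0. Let σ₁, σ₂, ξ₁, ξ₂ ∈ ℝ and let W₁, W₂ : ℝ → ℝ be continuous with W_i(0) = 0 and polynomial growth on (−∞,0]. For i = 1, 2 set u_i(τ) := e^{τβ_i} ξ_i + σ_i W_i(τ) − σ_i β_i ∫_τ^0 e^{(τ−τ′)β_i} W_i(τ′) dτ′. Then τ ↦ e^{−β_n τ} u₁(τ) u₂(τ) is integrable on (−∞,0], and ∫_{−∞}^0 e^{−β_n τ} u₁(τ) u₂(τ) dτ = A + B ξ₁ + C ξ₂ + ξ₁ ξ₂ / (β₁ + β₂ − β_n), where A = σ₁σ₂ ∫_{−∞}^0 e^{−β_n τ} W₁(τ) W₂(τ) dτ − σ₁σ₂ β₂ ∫_{−∞}^0 e^{−β_n τ} W₁(τ) (∫_τ^0 e^{(τ−τ′)β₂} W₂(τ′) dτ′)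 dτ − σ₁σ₂ β₁ ∫_{−∞}^0 e^{−β_n τ} W₂(τ) (∫_τ^0 e^{(τ−τ′)β₁} W₁(τ′) dτ′) dτ + σ₁σ₂ β₁β₂ ∫_{−∞}^0 e^{−β_n τ} (∫_τ^0 e^{(τ−τ′)β₁} W₁(τ′) dτ′)(∫_τ^0 e^{(τ−τ′)β₂} W₂(τ′) dτ′) dτ, B = σ₂ ∫_{−∞}^0 e^{(β₁−β_n)τ} W₂(τ) dτ − σ₂ β₂ ∫_{−∞}^0 e^{(β₁−β_n)τ} (∫_τ^0 e^{(τ−τ′)β₂} W₂(τ′) dτ′) dτ, and C = σ₁ ∫_{−∞}^0 e^{(β₂−β_n)τ} W₁(τ) dτ − σ₁ β₁ ∫_{−∞}^0 e^{(β₂−β_n)τ} (∫_τ^0 e^{(τ−τ′)β₁} W₁(τ′) dτ′) dτ, all integrals being absolutely convergent. -/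
open MeasureTheory Real intervalIntegral

lemma pm_base {c : ℝ} (hc : 0 < c) :
    IntegrableOn (fun τ => Real.exp (c * τ)) (Set.Iic (0:ℝ)) := by
  refine integrableOn_Iic_of_intervalIntegral_norm_bounded (1/c) 0
    (fun y : ℝ => (Continuous.integrableOn_Ioc (by continuity))) Filter.tendsto_id ?_
  filter_upwards with y
  have h1 : (∫ x in y..(0:ℝ), ‖Real.exp (c*x)‖) = ∫ x in y..(0:ℝ), Real.exp (c*x) := by
    apply intervalIntegral.integral_congr
    intro x _
    exact norm_of_nonneg (Real.exp_pos _).le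
  have h2 : c * ∫ x in y..(0:ℝ), Real.exp (c*x) = Real.exp 0 - Real.exp (c*y) := by
    rw [mul_integral_comp_mul_left (c := c) (f := Real.exp), mul_zero, integral_exp]
  have h3 : (∫ x in y..(0:ℝ), Real.exp (c*x)) = (Real.exp 0 - Real.exp (c*y)) / c := by
    rw [eq_div_iff hc.ne']; linarith [h2]
  show (∫ x in y..(0:ℝ), ‖Real.exp (c*x)‖) ≤ 1/c
  rw [h1, h3, Real.exp_zero]
  rw [div_le_div_iff₀ hc hc]
  nlinarith [Real.exp_pos (c*y)]

lemma pm_int_exp {a : ℝ} (ha : 0 < a) :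
    (∫ τ in Set.Iic (0:ℝ), Real.exp (a * τ)) = 1 / a := by
  have hderiv : ∀ x ∈ Set.Iic (0:ℝ), HasDerivAt (fun x => Real.exp (a*x) / a)
      (Real.exp (a*x)) x := by
    intro x _
    have h := (((hasDerivAt_id x).const_mul a).exp).div_const a
    simpa [mul_comm, mul_div_assoc, mul_div_cancel_left₀ _ ha.ne'] using h
  have htend : Filter.Tendsto (fun x => Real.exp (a*x) / a) Filter.atBot (nhds 0) := by
    have h1 : Filter.Tendsto (fun x : ℝ => a * x) Filter.atBot Filter.atBot :=
      Filter.tendsto_id.const_mul_atBot ha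
    have := (Real.tendsto_exp_atBot.comp h1).div_const a
    simpa using this
  have := integral_Iic_of_hasDerivAt_of_tendsto' hderiv (pm_base ha) htend
  simpa using this

lemma pm_master {c C : ℝ} (hc : 0 < c) {k : ℕ} {F : ℝ → ℝ} (hF : Continuous F)
    (hb : ∀ τ ≤ (0:ℝ), |F τ| ≤ C * (1 - τ) ^ k * Real.exp (c * τ)) :
    IntegrableOn F (Set.Iic (0:ℝ)) := by
  have hC : 0 ≤ C := le_trans (abs_nonneg (F 0)) (by simpa using hb 0 le_rfl)
  set M := C * ((Nat.factorial k : ℝ) * (2/c)^k * Real.exp (c/2)) with hM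
  have hg : IntegrableOn (fun τ => M * Real.exp (c/2 * τ)) (Set.Iic (0:ℝ)) :=
    (pm_base (by positivity)).const_mul M
  refine Integrable.mono' hg hF.aestronglyMeasurable ?_
  rw [ae_restrict_iff' measurableSet_Iic]
  refine Filter.Eventually.of_forall fun τ hτ => ?_
  have hτ' : (0:ℝ) ≤ 1 - τ := by linarith [Set.mem_Iic.mp hτ]
  have hy : (0:ℝ) ≤ c/2 * (1 - τ) := by positivity
  have h0 := Real.pow_div_factorial_le_exp _ hy k
  have hfact : (0:ℝ) < (Nat.factorial k : ℝ) := by positivity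
  have h1 : (1 - τ)^k ≤ (Nat.factorial k : ℝ) * (2/c)^k * Real.exp (c/2 * (1 - τ)) := by
    have he : (1 - τ)^k = (c/2 * (1-τ))^k * (2/c)^k := by
      rw [← mul_pow]
      congr 1
      field_simp
    rw [he]
    have h2 : (c/2 * (1-τ))^k ≤ (Nat.factorial k : ℝ) * Real.exp (c/2 * (1 - τ)) := by
      rw [div_le_iff₀ hfact] at h0
      linarith [h0]
    calc (c/2 * (1-τ))^k * (2/c)^k
        ≤ ((Nat.factorial k : ℝ) * Real.exp (c/2 * (1 - τ))) * (2/c)^k := by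
          apply mul_le_mul_of_nonneg_right h2 (by positivity)
      _ = (Nat.factorial k : ℝ) * (2/c)^k * Real.exp (c/2 * (1 - τ)) := by ring
  calc ‖F τ‖ = |F τ| := rfl
    _ ≤ C * (1 - τ)^k * Real.exp (c * τ) := hb τ (Set.mem_Iic.mp hτ)
    _ ≤ C * ((Nat.factorial k : ℝ) * (2/c)^k * Real.exp (c/2 * (1 - τ))) * Real.exp (c * τ) := by
        apply mul_le_mul_of_nonneg_right _ (Real.exp_pos _).le
        exact mul_le_mul_of_nonneg_left h1 hC
    _ = M * Real.exp (c/2 * τ) := by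
        rw [hM, mul_assoc, mul_assoc, mul_assoc, ← Real.exp_add,
          show c/2 * (1-τ) + c * τ = c/2 + c/2 * τ by ring, Real.exp_add]
        ring

lemma pm_g_cont (β : ℝ) {W : ℝ → ℝ} (hW : Continuous W) :
    Continuous (fun τ => ∫ τ' in τ..(0:ℝ), Real.exp ((τ - τ') * β) * W τ') := by
  have heq : ∀ τ : ℝ, (∫ τ' in τ..(0:ℝ), Real.exp ((τ - τ') * β) * W τ')
      = Real.exp (τ * β) * ∫ τ' in τ..(0:ℝ), Real.exp (-τ' * β) * W τ' := by
    intro τ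
    rw [← intervalIntegral.integral_const_mul]
    apply intervalIntegral.integral_congr
    intro x _
    show Real.exp ((τ - x) * β) * W x = Real.exp (τ * β) * (Real.exp (-x * β) * W x)
    have hxe : (τ - x) * β = τ * β + -x * β := by ring
    rw [hxe, Real.exp_add, mul_assoc]
  simp only [heq]
  apply Continuous.mul (by continuity)
  have hcont : Continuous (fun x : ℝ => Real.exp (-x * β) * W x) := by continuity
  have h := intervalIntegral.continuous_primitive (μ := volume)
    (fun a b => hcont.intervalIntegrable a b) (0:ℝ)
  have h2 : (fun τ : ℝ => ∫ τ' in τ..(0:ℝ), Real.exp (-τ' * β) * W τ')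
      = fun τ : ℝ => -∫ τ' in (0:ℝ)..τ, Real.exp (-τ' * β) * W τ' :=
    funext fun τ => intervalIntegral.integral_symm 0 τ
  rw [h2]
  exact h.neg

lemma pm_g_bound (β : ℝ) {W : ℝ → ℝ} {C : ℝ} {k : ℕ} (hC : 0 ≤ C)
    (hb : ∀ τ ≤ (0:ℝ), |W τ| ≤ C * (1 - τ) ^ k) :
    ∀ τ ≤ (0:ℝ), |∫ τ' in τ..(0:ℝ), Real.exp ((τ - τ') * β) * W τ'|
      ≤ C * (1 - τ) ^ (k+1) * Real.exp (min β 0 * τ) := by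
  intro τ hτ
  have hτ1 : (0:ℝ) ≤ 1 - τ := by linarith
  have key : ∀ x ∈ Set.uIoc τ (0:ℝ),
      ‖Real.exp ((τ - x) * β) * W x‖ ≤ Real.exp (min β 0 * τ) * (C * (1 - τ)^k) := by
    intro x hx
    rw [Set.uIoc_of_le hτ] at hx
    obtain ⟨hx1, hx2⟩ := hx
    have hxτ : τ ≤ x := hx1.le
    have hexp : (τ - x) * β ≤ min β 0 * τ := by
      rcases le_total β 0 with h | h
      · rw [min_eq_left h]; nlinarith
      · rw [min_eq_right h]; nlinarith
    have hWx : |W x| ≤ C * (1 - τ)^k := by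
      calc |W x| ≤ C * (1 - x)^k := hb x hx2
        _ ≤ C * (1 - τ)^k := by
            apply mul_le_mul_of_nonneg_left _ hC
            exact pow_le_pow_left₀ (by linarith) (by linarith) k
    calc ‖Real.exp ((τ - x) * β) * W x‖ = Real.exp ((τ - x) * β) * |W x| := by
          rw [norm_mul, Real.norm_eq_abs, Real.norm_eq_abs, abs_of_pos (Real.exp_pos _)]
      _ ≤ Real.exp (min β 0 * τ) * (C * (1 - τ)^k) := by
          apply mul_le_mul (Real.exp_le_exp.mpr hexp) hWx (abs_nonneg _) (Real.exp_pos _).le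
  have h := intervalIntegral.norm_integral_le_of_norm_le_const key
  rw [Real.norm_eq_abs] at h
  calc |∫ τ' in τ..(0:ℝ), Real.exp ((τ - τ') * β) * W τ'|
      ≤ Real.exp (min β 0 * τ) * (C * (1 - τ)^k) * |0 - τ| := h
    _ ≤ Real.exp (min β 0 * τ) * (C * (1 - τ)^k) * (1 - τ) := by
        apply mul_le_mul_of_nonneg_left _ (by positivity)
        rw [abs_of_nonneg (by linarith)]
        linarith
    _ = C * (1 - τ)^(k+1) * Real.exp (min β 0 * τ) := by rw [pow_succ]; ring

lemma pm_mul_bound {a b c d e : ℝ} (he : 0 < e) (h1 : |a| ≤ c) (h2 : |b| ≤ d)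
    (hc : 0 ≤ c) : |e * a * b| ≤ e * c * d := by
  rw [abs_mul, abs_mul, abs_of_pos he]
  exact mul_le_mul (mul_le_mul_of_nonneg_left h1 he.le) h2 (abs_nonneg _)
    (mul_nonneg he.le hc)

/-- Scalar form of the analytic expansion of the pullback-limit
parameterizing-manifold function. Under the non-resonance conditions, the product
`exp (-β_n τ) u₁ τ u₂ τ` is integrable on `(-∞, 0]`, all the integrals defining the
random coefficients `M₁, …, M₈` are absolutely convergent, and
`∫_{-∞}^0 exp (-β_n τ) u₁ τ u₂ τ dτ = A + B ξ₁ + C ξ₂ + ξ₁ ξ₂ / (β₁ + β₂ - β_n)`. -/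
theorem pm_expansion_scalar
    (βn β₁ β₂ : ℝ) (hβn : βn < 0)
    (hgap₁₂ : 0 < β₁ + β₂ - βn) (hgap₁ : 0 < β₁ - βn) (hgap₂ : 0 < β₂ - βn)
    (σ₁ σ₂ ξ₁ ξ₂ : ℝ)
    (W₁ W₂ : ℝ → ℝ) (hW₁_cont : Continuous W₁) (hW₂_cont : Continuous W₂)
    (hW₁0 : W₁ 0 = 0) (hW₂0 : W₂ 0 = 0)
    (hW₁_growth : ∃ C > (0:ℝ), ∃ k : ℕ, ∀ τ ≤ (0:ℝ), |W₁ τ| ≤ C * (1 + |τ|) ^ k)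
    (hW₂_growth : ∃ C > (0:ℝ), ∃ k : ℕ, ∀ τ ≤ (0:ℝ), |W₂ τ| ≤ C * (1 + |τ|) ^ k)
    (u₁ u₂ : ℝ → ℝ)
    (hu₁ : ∀ τ, u₁ τ = Real.exp (τ * β₁) * ξ₁ + σ₁ * W₁ τ
      - σ₁ * β₁ * ∫ τ' in τ..0, Real.exp ((τ - τ') * β₁) * W₁ τ')
    (hu₂ : ∀ τ, u₂ τ = Real.exp (τ * β₂) * ξ₂ + σ₂ * W₂ τ
      - σ₂ * β₂ * ∫ τ' in τ..0, Real.exp ((τ - τ') * β₂) * W₂ τ') :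
    IntegrableOn (fun τ => Real.exp (-βn * τ) * u₁ τ * u₂ τ) (Set.Iic 0) ∧
    IntegrableOn (fun τ => Real.exp (-βn * τ) * W₁ τ * W₂ τ) (Set.Iic 0) ∧
    IntegrableOn (fun τ => Real.exp (-βn * τ) * W₁ τ *
      ∫ τ' in τ..0, Real.exp ((τ - τ') * β₂) * W₂ τ') (Set.Iic 0) ∧
    IntegrableOn (fun τ => Real.exp (-βn * τ) * W₂ τ *
      ∫ τ' in τ..0, Real.exp ((τ - τ') * β₁) * W₁ τ') (Set.Iic 0) ∧
    IntegrableOn (fun τ => Real.exp (-βn * τ) *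
      (∫ τ' in τ..0, Real.exp ((τ - τ') * β₁) * W₁ τ') *
      (∫ τ' in τ..0, Real.exp ((τ - τ') * β₂) * W₂ τ')) (Set.Iic 0) ∧
    IntegrableOn (fun τ => Real.exp ((β₁ - βn) * τ) * W₂ τ) (Set.Iic 0) ∧
    IntegrableOn (fun τ => Real.exp ((β₁ - βn) * τ) *
      ∫ τ' in τ..0, Real.exp ((τ - τ') * β₂) * W₂ τ') (Set.Iic 0) ∧
    IntegrableOn (fun τ => Real.exp ((β₂ - βn) * τ) * W₁ τ) (Set.Iic 0) ∧
    IntegrableOn (fun τ => Real.exp ((β₂ - βn) * τ) *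
      ∫ τ' in τ..0, Real.exp ((τ - τ') * β₁) * W₁ τ') (Set.Iic 0) ∧
    (∫ τ in Set.Iic (0:ℝ), Real.exp (-βn * τ) * u₁ τ * u₂ τ)
      = (σ₁ * σ₂ * (∫ τ in Set.Iic (0:ℝ), Real.exp (-βn * τ) * W₁ τ * W₂ τ)
          - σ₁ * σ₂ * β₂ * (∫ τ in Set.Iic (0:ℝ), Real.exp (-βn * τ) * W₁ τ *
              ∫ τ' in τ..0, Real.exp ((τ - τ') * β₂) * W₂ τ')
          - σ₁ * σ₂ * β₁ * (∫ τ in Set.Iic (0:ℝ), Real.exp (-βn * τ) * W₂ τ *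
              ∫ τ' in τ..0, Real.exp ((τ - τ') * β₁) * W₁ τ')
          + σ₁ * σ₂ * β₁ * β₂ * (∫ τ in Set.Iic (0:ℝ), Real.exp (-βn * τ) *
              (∫ τ' in τ..0, Real.exp ((τ - τ') * β₁) * W₁ τ') *
              (∫ τ' in τ..0, Real.exp ((τ - τ') * β₂) * W₂ τ')))
        + (σ₂ * (∫ τ in Set.Iic (0:ℝ), Real.exp ((β₁ - βn) * τ) * W₂ τ)
            - σ₂ * β₂ * (∫ τ in Set.Iic (0:ℝ), Real.exp ((β₁ - βn) * τ) *
                ∫ τ' in τ..0, Real.exp ((τ - τ') * β₂) * W₂ τ')) * ξ₁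
        + (σ₁ * (∫ τ in Set.Iic (0:ℝ), Real.exp ((β₂ - βn) * τ) * W₁ τ)
            - σ₁ * β₁ * (∫ τ in Set.Iic (0:ℝ), Real.exp ((β₂ - βn) * τ) *
                ∫ τ' in τ..0, Real.exp ((τ - τ') * β₁) * W₁ τ')) * ξ₂
        + ξ₁ * ξ₂ / (β₁ + β₂ - βn) := by
  obtain ⟨C₁, hC₁, k₁, hb₁'⟩ := hW₁_growth
  obtain ⟨C₂, hC₂, k₂, hb₂'⟩ := hW₂_growth
  have hb₁ : ∀ τ ≤ (0:ℝ), |W₁ τ| ≤ C₁ * (1 - τ) ^ k₁ := by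
    intro τ hτ
    have := hb₁' τ hτ
    rwa [abs_of_nonpos hτ, ← sub_eq_add_neg] at this
  have hb₂ : ∀ τ ≤ (0:ℝ), |W₂ τ| ≤ C₂ * (1 - τ) ^ k₂ := by
    intro τ hτ
    have := hb₂' τ hτ
    rwa [abs_of_nonpos hτ, ← sub_eq_add_neg] at this
  have gb₁ := pm_g_bound β₁ hC₁.le hb₁
  have gb₂ := pm_g_bound β₂ hC₂.le hb₂
  have gc₁ := pm_g_cont β₁ hW₁_cont
  have gc₂ := pm_g_cont β₂ hW₂_cont
  have hexp : ∀ d : ℝ, Continuous (fun τ : ℝ => Real.exp (d * τ)) :=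
    fun d => Real.continuous_exp.comp (continuous_const.mul continuous_id)
  have hβn' : (0:ℝ) < -βn := by linarith
  have hm₁ : (0:ℝ) < min β₁ 0 - βn := by
    have : βn < min β₁ 0 := lt_min (by linarith) hβn
    linarith
  have hm₂ : (0:ℝ) < min β₂ 0 - βn := by
    have : βn < min β₂ 0 := lt_min (by linarith) hβn
    linarith
  have hm₁₂ : (0:ℝ) < min β₁ 0 + min β₂ 0 - βn := by
    rcases min_cases β₁ 0 with ⟨h1, _⟩ | ⟨h1, _⟩ <;>
      rcases min_cases β₂ 0 with ⟨h2, _⟩ | ⟨h2, _⟩ <;> rw [h1, h2] <;> linarith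
  have h6c : (0:ℝ) < β₁ - βn + min β₂ 0 := by
    rcases min_cases β₂ 0 with ⟨h2, _⟩ | ⟨h2, _⟩ <;> rw [h2] <;> linarith
  have h8c : (0:ℝ) < β₂ - βn + min β₁ 0 := by
    rcases min_cases β₁ 0 with ⟨h1, _⟩ | ⟨h1, _⟩ <;> rw [h1] <;> linarith
  -- the nine integrability statements
  have h1 : IntegrableOn (fun τ => Real.exp (-βn * τ) * W₁ τ * W₂ τ) (Set.Iic 0) := by
    refine pm_master (C := C₁ * C₂) (k := k₁ + k₂) hβn'
      (((hexp (-βn)).mul hW₁_cont).mul hW₂_cont) ?_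
    intro τ hτ
    have hτ1 : (0:ℝ) ≤ 1 - τ := by linarith
    calc |Real.exp (-βn * τ) * W₁ τ * W₂ τ|
        ≤ Real.exp (-βn * τ) * (C₁ * (1 - τ) ^ k₁) * (C₂ * (1 - τ) ^ k₂) :=
          pm_mul_bound (Real.exp_pos _) (hb₁ τ hτ) (hb₂ τ hτ)
            (mul_nonneg hC₁.le (pow_nonneg hτ1 _))
      _ = C₁ * C₂ * (1 - τ) ^ (k₁ + k₂) * Real.exp (-βn * τ) := by rw [pow_add]; ring
  have h2 : IntegrableOn (fun τ => Real.exp (-βn * τ) * W₁ τ *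
      ∫ τ' in τ..0, Real.exp ((τ - τ') * β₂) * W₂ τ') (Set.Iic 0) := by
    refine pm_master (C := C₁ * C₂) (k := k₁ + (k₂ + 1)) hm₂
      (((hexp (-βn)).mul hW₁_cont).mul gc₂) ?_
    intro τ hτ
    have hτ1 : (0:ℝ) ≤ 1 - τ := by linarith
    calc |Real.exp (-βn * τ) * W₁ τ * ∫ τ' in τ..0, Real.exp ((τ - τ') * β₂) * W₂ τ'|
        ≤ Real.exp (-βn * τ) * (C₁ * (1 - τ) ^ k₁)
            * (C₂ * (1 - τ) ^ (k₂ + 1) * Real.exp (min β₂ 0 * τ)) :=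
          pm_mul_bound (Real.exp_pos _) (hb₁ τ hτ) (gb₂ τ hτ)
            (mul_nonneg hC₁.le (pow_nonneg hτ1 _))
      _ = C₁ * C₂ * (1 - τ) ^ (k₁ + (k₂ + 1)) * Real.exp ((min β₂ 0 - βn) * τ) := by
          rw [show (min β₂ 0 - βn) * τ = -βn * τ + min β₂ 0 * τ by ring, Real.exp_add,
            pow_add]
          ring
  have h3 : IntegrableOn (fun τ => Real.exp (-βn * τ) * W₂ τ *
      ∫ τ' in τ..0, Real.exp ((τ - τ') * β₁) * W₁ τ') (Set.Iic 0) := by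
    refine pm_master (C := C₂ * C₁) (k := k₂ + (k₁ + 1)) hm₁
      (((hexp (-βn)).mul hW₂_cont).mul gc₁) ?_
    intro τ hτ
    have hτ1 : (0:ℝ) ≤ 1 - τ := by linarith
    calc |Real.exp (-βn * τ) * W₂ τ * ∫ τ' in τ..0, Real.exp ((τ - τ') * β₁) * W₁ τ'|
        ≤ Real.exp (-βn * τ) * (C₂ * (1 - τ) ^ k₂)
            * (C₁ * (1 - τ) ^ (k₁ + 1) * Real.exp (min β₁ 0 * τ)) :=
          pm_mul_bound (Real.exp_pos _) (hb₂ τ hτ) (gb₁ τ hτ)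
            (mul_nonneg hC₂.le (pow_nonneg hτ1 _))
      _ = C₂ * C₁ * (1 - τ) ^ (k₂ + (k₁ + 1)) * Real.exp ((min β₁ 0 - βn) * τ) := by
          rw [show (min β₁ 0 - βn) * τ = -βn * τ + min β₁ 0 * τ by ring, Real.exp_add,
            pow_add]
          ring
  have h4 : IntegrableOn (fun τ => Real.exp (-βn * τ) *
      (∫ τ' in τ..0, Real.exp ((τ - τ') * β₁) * W₁ τ') *
      (∫ τ' in τ..0, Real.exp ((τ - τ') * β₂) * W₂ τ')) (Set.Iic 0) := by
    refine pm_master (C := C₁ * C₂) (k := (k₁ + 1) + (k₂ + 1)) hm₁₂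
      (((hexp (-βn)).mul gc₁).mul gc₂) ?_
    intro τ hτ
    have hτ1 : (0:ℝ) ≤ 1 - τ := by linarith
    calc |Real.exp (-βn * τ) * (∫ τ' in τ..0, Real.exp ((τ - τ') * β₁) * W₁ τ')
          * (∫ τ' in τ..0, Real.exp ((τ - τ') * β₂) * W₂ τ')|
        ≤ Real.exp (-βn * τ) * (C₁ * (1 - τ) ^ (k₁ + 1) * Real.exp (min β₁ 0 * τ))
            * (C₂ * (1 - τ) ^ (k₂ + 1) * Real.exp (min β₂ 0 * τ)) :=
          pm_mul_bound (Real.exp_pos _) (gb₁ τ hτ) (gb₂ τ hτ)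
            (mul_nonneg (mul_nonneg hC₁.le (pow_nonneg hτ1 _)) (Real.exp_pos _).le)
      _ = C₁ * C₂ * (1 - τ) ^ ((k₁ + 1) + (k₂ + 1))
            * Real.exp ((min β₁ 0 + min β₂ 0 - βn) * τ) := by
          rw [show (min β₁ 0 + min β₂ 0 - βn) * τ
              = -βn * τ + (min β₁ 0 * τ + min β₂ 0 * τ) by ring, Real.exp_add,
            Real.exp_add, pow_add]
          ring
  have h5 : IntegrableOn (fun τ => Real.exp ((β₁ - βn) * τ) * W₂ τ) (Set.Iic 0) := by
    refine pm_master (C := C₂) (k := k₂) hgap₁ ((hexp (β₁ - βn)).mul hW₂_cont) ?_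
    intro τ hτ
    calc |Real.exp ((β₁ - βn) * τ) * W₂ τ|
        = Real.exp ((β₁ - βn) * τ) * |W₂ τ| := by
          rw [abs_mul, abs_of_pos (Real.exp_pos _)]
      _ ≤ Real.exp ((β₁ - βn) * τ) * (C₂ * (1 - τ) ^ k₂) :=
          mul_le_mul_of_nonneg_left (hb₂ τ hτ) (Real.exp_pos _).le
      _ = C₂ * (1 - τ) ^ k₂ * Real.exp ((β₁ - βn) * τ) := by ring
  have h6 : IntegrableOn (fun τ => Real.exp ((β₁ - βn) * τ) *
      ∫ τ' in τ..0, Real.exp ((τ - τ') * β₂) * W₂ τ') (Set.Iic 0) := by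
    refine pm_master (C := C₂) (k := k₂ + 1) h6c ((hexp (β₁ - βn)).mul gc₂) ?_
    intro τ hτ
    calc |Real.exp ((β₁ - βn) * τ) * ∫ τ' in τ..0, Real.exp ((τ - τ') * β₂) * W₂ τ'|
        = Real.exp ((β₁ - βn) * τ)
            * |∫ τ' in τ..0, Real.exp ((τ - τ') * β₂) * W₂ τ'| := by
          rw [abs_mul, abs_of_pos (Real.exp_pos _)]
      _ ≤ Real.exp ((β₁ - βn) * τ)
            * (C₂ * (1 - τ) ^ (k₂ + 1) * Real.exp (min β₂ 0 * τ)) :=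
          mul_le_mul_of_nonneg_left (gb₂ τ hτ) (Real.exp_pos _).le
      _ = C₂ * (1 - τ) ^ (k₂ + 1) * Real.exp ((β₁ - βn + min β₂ 0) * τ) := by
          rw [show (β₁ - βn + min β₂ 0) * τ = (β₁ - βn) * τ + min β₂ 0 * τ by ring,
            Real.exp_add]
          ring
  have h7 : IntegrableOn (fun τ => Real.exp ((β₂ - βn) * τ) * W₁ τ) (Set.Iic 0) := by
    refine pm_master (C := C₁) (k := k₁) hgap₂ ((hexp (β₂ - βn)).mul hW₁_cont) ?_
    intro τ hτ
    calc |Real.exp ((β₂ - βn) * τ) * W₁ τ|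
        = Real.exp ((β₂ - βn) * τ) * |W₁ τ| := by
          rw [abs_mul, abs_of_pos (Real.exp_pos _)]
      _ ≤ Real.exp ((β₂ - βn) * τ) * (C₁ * (1 - τ) ^ k₁) :=
          mul_le_mul_of_nonneg_left (hb₁ τ hτ) (Real.exp_pos _).le
      _ = C₁ * (1 - τ) ^ k₁ * Real.exp ((β₂ - βn) * τ) := by ring
  have h8 : IntegrableOn (fun τ => Real.exp ((β₂ - βn) * τ) *
      ∫ τ' in τ..0, Real.exp ((τ - τ') * β₁) * W₁ τ') (Set.Iic 0) := by
    refine pm_master (C := C₁) (k := k₁ + 1) h8c ((hexp (β₂ - βn)).mul gc₁) ?_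
    intro τ hτ
    calc |Real.exp ((β₂ - βn) * τ) * ∫ τ' in τ..0, Real.exp ((τ - τ') * β₁) * W₁ τ'|
        = Real.exp ((β₂ - βn) * τ)
            * |∫ τ' in τ..0, Real.exp ((τ - τ') * β₁) * W₁ τ'| := by
          rw [abs_mul, abs_of_pos (Real.exp_pos _)]
      _ ≤ Real.exp ((β₂ - βn) * τ)
            * (C₁ * (1 - τ) ^ (k₁ + 1) * Real.exp (min β₁ 0 * τ)) :=
          mul_le_mul_of_nonneg_left (gb₁ τ hτ) (Real.exp_pos _).le
      _ = C₁ * (1 - τ) ^ (k₁ + 1) * Real.exp ((β₂ - βn + min β₁ 0) * τ) := by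
          rw [show (β₂ - βn + min β₁ 0) * τ = (β₂ - βn) * τ + min β₁ 0 * τ by ring,
            Real.exp_add]
          ring
  have h9 : IntegrableOn (fun τ => Real.exp ((β₁ + β₂ - βn) * τ)) (Set.Iic (0:ℝ)) :=
    pm_base hgap₁₂
  -- pointwise decomposition
  have hK : (fun τ => Real.exp (-βn * τ) * u₁ τ * u₂ τ)
      = (fun τ => σ₁ * σ₂ * (Real.exp (-βn * τ) * W₁ τ * W₂ τ)
          - σ₁ * σ₂ * β₂ * (Real.exp (-βn * τ) * W₁ τ *
              ∫ τ' in τ..0, Real.exp ((τ - τ') * β₂) * W₂ τ')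
          - σ₁ * σ₂ * β₁ * (Real.exp (-βn * τ) * W₂ τ *
              ∫ τ' in τ..0, Real.exp ((τ - τ') * β₁) * W₁ τ')
          + σ₁ * σ₂ * β₁ * β₂ * (Real.exp (-βn * τ) *
              (∫ τ' in τ..0, Real.exp ((τ - τ') * β₁) * W₁ τ') *
              (∫ τ' in τ..0, Real.exp ((τ - τ') * β₂) * W₂ τ'))
          + (σ₂ * (Real.exp ((β₁ - βn) * τ) * W₂ τ)
              - σ₂ * β₂ * (Real.exp ((β₁ - βn) * τ) *
                  ∫ τ' in τ..0, Real.exp ((τ - τ') * β₂) * W₂ τ')) * ξ₁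
          + (σ₁ * (Real.exp ((β₂ - βn) * τ) * W₁ τ)
              - σ₁ * β₁ * (Real.exp ((β₂ - βn) * τ) *
                  ∫ τ' in τ..0, Real.exp ((τ - τ') * β₁) * W₁ τ')) * ξ₂
          + ξ₁ * ξ₂ * Real.exp ((β₁ + β₂ - βn) * τ)) := by
    funext τ
    rw [hu₁ τ, hu₂ τ]
    have e1 : Real.exp ((β₁ - βn) * τ) = Real.exp (-βn * τ) * Real.exp (τ * β₁) := by
      rw [← Real.exp_add]; congr 1; ring
    have e2 : Real.exp ((β₂ - βn) * τ) = Real.exp (-βn * τ) * Real.exp (τ * β₂) := by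
      rw [← Real.exp_add]; congr 1; ring
    have e3 : Real.exp ((β₁ + β₂ - βn) * τ)
        = Real.exp (-βn * τ) * (Real.exp (τ * β₁) * Real.exp (τ * β₂)) := by
      rw [← Real.exp_add, ← Real.exp_add]; congr 1; ring
    rw [e1, e2, e3]
    ring
  -- scaled integrable pieces
  have I1 : IntegrableOn (fun τ => σ₁ * σ₂ * (Real.exp (-βn * τ) * W₁ τ * W₂ τ)) (Set.Iic 0) := h1.const_mul _
  have I2 : IntegrableOn (fun τ => σ₁ * σ₂ * β₂ * (Real.exp (-βn * τ) * W₁ τ * ∫ τ' in τ..0, Real.exp ((τ - τ') * β₂) * W₂ τ')) (Set.Iic 0) := h2.const_mul _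
  have I3 : IntegrableOn (fun τ => σ₁ * σ₂ * β₁ * (Real.exp (-βn * τ) * W₂ τ * ∫ τ' in τ..0, Real.exp ((τ - τ') * β₁) * W₁ τ')) (Set.Iic 0) := h3.const_mul _
  have I4 : IntegrableOn (fun τ => σ₁ * σ₂ * β₁ * β₂ * (Real.exp (-βn * τ) * (∫ τ' in τ..0, Real.exp ((τ - τ') * β₁) * W₁ τ') * (∫ τ' in τ..0, Real.exp ((τ - τ') * β₂) * W₂ τ'))) (Set.Iic 0) := h4.const_mul _
  have M5 : IntegrableOn (fun τ => σ₂ * (Real.exp ((β₁ - βn) * τ) * W₂ τ)) (Set.Iic 0) := h5.const_mul _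
  have M6 : IntegrableOn (fun τ => σ₂ * β₂ * (Real.exp ((β₁ - βn) * τ) * ∫ τ' in τ..0, Real.exp ((τ - τ') * β₂) * W₂ τ')) (Set.Iic 0) := h6.const_mul _
  have M7 : IntegrableOn (fun τ => σ₁ * (Real.exp ((β₂ - βn) * τ) * W₁ τ)) (Set.Iic 0) := h7.const_mul _
  have M8 : IntegrableOn (fun τ => σ₁ * β₁ * (Real.exp ((β₂ - βn) * τ) * ∫ τ' in τ..0, Real.exp ((τ - τ') * β₁) * W₁ τ')) (Set.Iic 0) := h8.const_mul _
  have I5 : IntegrableOn (fun τ => (σ₂ * (Real.exp ((β₁ - βn) * τ) * W₂ τ) - σ₂ * β₂ * (Real.exp ((β₁ - βn) * τ) * ∫ τ' in τ..0, Real.exp ((τ - τ') * β₂) * W₂ τ')) * ξ₁) (Set.Iic 0) := (M5.sub M6).mul_const _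
  have I6 : IntegrableOn (fun τ => (σ₁ * (Real.exp ((β₂ - βn) * τ) * W₁ τ) - σ₁ * β₁ * (Real.exp ((β₂ - βn) * τ) * ∫ τ' in τ..0, Real.exp ((τ - τ') * β₁) * W₁ τ')) * ξ₂) (Set.Iic 0) := (M7.sub M8).mul_const _
  have I7 : IntegrableOn (fun τ => ξ₁ * ξ₂ * Real.exp ((β₁ + β₂ - βn) * τ)) (Set.Iic 0) := h9.const_mul _
  have J3 : IntegrableOn (fun τ => σ₁ * σ₂ * (Real.exp (-βn * τ) * W₁ τ * W₂ τ) - σ₁ * σ₂ * β₂ * (Real.exp (-βn * τ) * W₁ τ * ∫ τ' in τ..0, Real.exp ((τ - τ') * β₂) * W₂ τ')) (Set.Iic 0) := I1.sub I2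
  have J4 : IntegrableOn (fun τ => σ₁ * σ₂ * (Real.exp (-βn * τ) * W₁ τ * W₂ τ) - σ₁ * σ₂ * β₂ * (Real.exp (-βn * τ) * W₁ τ * ∫ τ' in τ..0, Real.exp ((τ - τ') * β₂) * W₂ τ') - σ₁ * σ₂ * β₁ * (Real.exp (-βn * τ) * W₂ τ * ∫ τ' in τ..0, Real.exp ((τ - τ') * β₁) * W₁ τ')) (Set.Iic 0) := J3.sub I3
  have J5 : IntegrableOn (fun τ => σ₁ * σ₂ * (Real.exp (-βn * τ) * W₁ τ * W₂ τ) - σ₁ * σ₂ * β₂ * (Real.exp (-βn * τ) * W₁ τ * ∫ τ' in τ..0, Real.exp ((τ - τ') * β₂) * W₂ τ') - σ₁ * σ₂ * β₁ * (Real.exp (-βn * τ) * W₂ τ * ∫ τ' in τ..0, Real.exp ((τ - τ') * β₁) * W₁ τ') + σ₁ * σ₂ * β₁ * β₂ * (Real.exp (-βn * τ) * (∫ τ' in τ..0, Real.exp ((τ - τ') * β₁) * W₁ τ') * (∫ τ' in τ..0, Real.exp ((τ - τ') * β₂) * W₂ τ'))) (Set.Iic 0) := J4.add I4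
  have J6 : IntegrableOn (fun τ => σ₁ * σ₂ * (Real.exp (-βn * τ) * W₁ τ * W₂ τ) - σ₁ * σ₂ * β₂ * (Real.exp (-βn * τ) * W₁ τ * ∫ τ' in τ..0, Real.exp ((τ - τ') * β₂) * W₂ τ') - σ₁ * σ₂ * β₁ * (Real.exp (-βn * τ) * W₂ τ * ∫ τ' in τ..0, Real.exp ((τ - τ') * β₁) * W₁ τ') + σ₁ * σ₂ * β₁ * β₂ * (Real.exp (-βn * τ) * (∫ τ' in τ..0, Real.exp ((τ - τ') * β₁) * W₁ τ') * (∫ τ' in τ..0, Real.exp ((τ - τ') * β₂) * W₂ τ')) + (σ₂ * (Real.exp ((β₁ - βn) * τ) * W₂ τ) - σ₂ * β₂ * (Real.exp ((β₁ - βn) * τ) * ∫ τ' in τ..0, Real.exp ((τ - τ') * β₂) * W₂ τ')) * ξ₁) (Set.Iic 0) := J5.add I5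
  have J7 : IntegrableOn (fun τ => σ₁ * σ₂ * (Real.exp (-βn * τ) * W₁ τ * W₂ τ) - σ₁ * σ₂ * β₂ * (Real.exp (-βn * τ) * W₁ τ * ∫ τ' in τ..0, Real.exp ((τ - τ') * β₂) * W₂ τ') - σ₁ * σ₂ * β₁ * (Real.exp (-βn * τ) * W₂ τ * ∫ τ' in τ..0, Real.exp ((τ - τ') * β₁) * W₁ τ') + σ₁ * σ₂ * β₁ * β₂ * (Real.exp (-βn * τ) * (∫ τ' in τ..0, Real.exp ((τ - τ') * β₁) * W₁ τ') * (∫ τ' in τ..0, Real.exp ((τ - τ') * β₂) * W₂ τ')) + (σ₂ * (Real.exp ((β₁ - βn) * τ) * W₂ τ) - σ₂ * β₂ * (Real.exp ((β₁ - βn) * τ) * ∫ τ' in τ..0, Real.exp ((τ - τ') * β₂) * W₂ τ')) * ξ₁ + (σ₁ * (Real.exp ((β₂ - βn) * τ) * W₁ τ) - σ₁ * β₁ * (Real.exp ((β₂ - βn) * τ) * ∫ τ' in τ..0, Real.exp ((τ - τ') * β₁) * W₁ τ')) * ξ₂) (Set.Iic 0) := J6.add I6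
  have h0 : IntegrableOn (fun τ => Real.exp (-βn * τ) * u₁ τ * u₂ τ) (Set.Iic 0) := by
    rw [hK]
    exact J7.add I7
  refine ⟨h0, h1, h2, h3, h4, h5, h6, h7, h8, ?_⟩
  rw [hK, MeasureTheory.integral_add J7 I7, MeasureTheory.integral_add J6 I6,
    MeasureTheory.integral_add J5 I5, MeasureTheory.integral_add J4 I4,
    MeasureTheory.integral_sub J3 I3, MeasureTheory.integral_sub I1 I2,
    MeasureTheory.integral_mul_const, MeasureTheory.integral_mul_const,
    MeasureTheory.integral_sub M5 M6, MeasureTheory.integral_sub M7 M8,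
    MeasureTheory.integral_const_mul, MeasureTheory.integral_const_mul,
    MeasureTheory.integral_const_mul, MeasureTheory.integral_const_mul,
    MeasureTheory.integral_const_mul, MeasureTheory.integral_const_mul,
    MeasureTheory.integral_const_mul, MeasureTheory.integral_const_mul,
    MeasureTheory.integral_const_mul, pm_int_exp hgap₁₂]
  ring
end

section
/- Let β < 0, σ ∈ ℝ, and let W : ℝ → ℝ be continuous with polynomial growth on all of ℝ (i.e., there exist C > 0 and k ∈ ℕ with |W(τ)| ≤ C(1+|τ|)^k for all τ ∈ ℝ). Then for every t ∈ ℝ the integral ∫_{−∞}^t e^{(t−s)β} W(s) ds converges absolutely, the function z(t) := σ W(t) + σβ ∫_{−∞}^t e^{(t−s)β} W(s) ds is continuous, and for all t ∈ ℝ it satisfies z(t) = z(0) + β ∫_0^t z(r) dr + σ (W(t) − W(0)), where the integral is the signed integral when t < 0. -/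
open MeasureTheory Real intervalIntegral

lemma aux_integrableOn_exp_mul_Iic {b : ℝ} (hb : 0 < b) (d : ℝ) :
    IntegrableOn (fun x => Real.exp (b * x)) (Set.Iic d) := by
  have hcont : Continuous fun x : ℝ => Real.exp (b * x) :=
    Real.continuous_exp.comp (continuous_const.mul continuous_id)
  refine integrableOn_Iic_of_intervalIntegral_norm_bounded (Real.exp (b * d) / b) d
    (fun y => (hcont.intervalIntegrable _ _).1) Filter.tendsto_id ?_
  filter_upwards with y
  have : (∫ x in y..d, Real.exp (b * x)) = b⁻¹ • ∫ x in b * y..b * d, Real.exp x := by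
    simpa using intervalIntegral.integral_comp_mul_left (fun x => Real.exp x) hb.ne'
  simp only [id]
  rw [show (fun x => ‖Real.exp (b * x)‖) = fun x => Real.exp (b * x) by
      funext x; exact Real.norm_of_nonneg (Real.exp_pos _).le, this]
  rw [integral_exp, smul_eq_mul]
  rw [div_eq_inv_mul]
  have hbinv : (0:ℝ) ≤ b⁻¹ := (inv_pos.mpr hb).le
  have : Real.exp (b * d) - Real.exp (b * y) ≤ Real.exp (b * d) := by
    have := (Real.exp_pos (b * y)).le; linarith
  exact mul_le_mul_of_nonneg_left this hbinv

lemma aux_tendsto_poly_exp {b : ℝ} (hb : 0 < b) (k : ℕ) :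
    Filter.Tendsto (fun x : ℝ => (1 + |x|) ^ k * Real.exp (-(b * x)))
      Filter.atTop (nhds 0) := by
  have h1 : Filter.Tendsto (fun x : ℝ => b * (1 + x)) Filter.atTop Filter.atTop := by
    apply Filter.Tendsto.const_mul_atTop hb
    exact Filter.tendsto_atTop_add_const_left _ 1 Filter.tendsto_id
  have h2 :
      Filter.Tendsto (fun x : ℝ => (b * (1 + x)) ^ k * Real.exp (-(b * (1 + x))))
        Filter.atTop (nhds 0) :=
    (Real.tendsto_pow_mul_exp_neg_atTop_nhds_zero k).comp h1
  have h3 :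
      Filter.Tendsto
        (fun x : ℝ => (b * (1 + x)) ^ k * Real.exp (-(b * (1 + x))) * (Real.exp b / b ^ k))
        Filter.atTop (nhds 0) := by
    simpa using h2.mul_const (Real.exp b / b ^ k)
  have key : Filter.Tendsto (fun x : ℝ => (1 + x) ^ k * Real.exp (-(b * x)))
      Filter.atTop (nhds 0) := by
    refine h3.congr fun x => ?_
    rw [show -(b * (1 + x)) = -b + -(b * x) by ring, Real.exp_add, mul_pow]
    rw [Real.exp_neg]
    field_simp
  refine key.congr' ?_
  filter_upwards [Filter.eventually_ge_atTop (0:ℝ)] with x hx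
  rw [abs_of_nonneg hx]

/-- Pathwise stationary Ornstein–Uhlenbeck process. For `β < 0` and `W`
continuous of polynomial growth on `ℝ`, the integral `∫_{-∞}^t exp ((t - s) β) W s ds`
converges absolutely for each `t`, the function
`z t = σ W t + σ β ∫_{-∞}^t exp ((t - s) β) W s ds` is continuous, and it satisfies
the Langevin integral equation `z t = z 0 + β * ∫_0^t z r dr + σ (W t - W 0)`. -/
theorem stationary_OU_pathwise
    (β σ : ℝ) (hβ : β < 0) (W : ℝ → ℝ) (hW_cont : Continuous W)
    (hW_growth : ∃ C > (0:ℝ), ∃ k : ℕ, ∀ τ : ℝ, |W τ| ≤ C * (1 + |τ|) ^ k)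
    (z : ℝ → ℝ)
    (hz : ∀ t, z t = σ * W t
      + σ * β * ∫ s in Set.Iic t, Real.exp ((t - s) * β) * W s) :
    (∀ t : ℝ, IntegrableOn (fun s => Real.exp ((t - s) * β) * W s) (Set.Iic t)) ∧
    Continuous z ∧
    (∀ t : ℝ, z t = z 0 + β * (∫ r in (0:ℝ)..t, z r) + σ * (W t - W 0)) := by
  obtain ⟨C, hC, k, hWk⟩ := hW_growth
  set b : ℝ := -β / 2 with hb_def
  have hb : 0 < b := by simp [hb_def]; linarith
  set h : ℝ → ℝ := fun s => Real.exp (-(s * β)) * W s with hh_def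
  have hh_cont : Continuous h :=
    (Real.continuous_exp.comp (continuous_id.mul continuous_const).neg).mul hW_cont
  -- integrability of h on Iic t
  have hOb : h =O[Filter.atBot] fun s => Real.exp (b * s) := by
    have hphi : Filter.Tendsto (fun s : ℝ => C * (1 + |s|) ^ k * Real.exp (b * s))
        Filter.atBot (nhds 0) := by
      have h0 := ((aux_tendsto_poly_exp hb k).const_mul C).comp Filter.tendsto_neg_atBot_atTop
      rw [mul_zero] at h0
      refine h0.congr fun s => ?_
      simp only [Function.comp]
      rw [abs_neg]
      ring_nf
    have hev : ∀ᶠ s in Filter.atBot,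
        C * (1 + |s|) ^ k * Real.exp (b * s) ≤ 1 :=
      hphi.eventually (eventually_le_nhds zero_lt_one)
    rw [Asymptotics.isBigO_iff]
    refine ⟨1, ?_⟩
    filter_upwards [hev] with s hs
    have hWs := hWk s
    have hexp : Real.exp (-(s * β)) = Real.exp (b * s) * Real.exp (b * s) := by
      rw [← Real.exp_add]; congr 1; rw [hb_def]; ring
    have h1 : |h s| ≤ C * (1 + |s|) ^ k * Real.exp (b * s) * Real.exp (b * s) := by
      rw [hh_def]
      simp only [abs_mul, Real.abs_exp]
      rw [hexp]
      have h2 : Real.exp (b * s) * Real.exp (b * s) * |W s| ≤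
          Real.exp (b * s) * Real.exp (b * s) * (C * (1 + |s|) ^ k) :=
        mul_le_mul_of_nonneg_left hWs (by positivity)
      calc Real.exp (b * s) * Real.exp (b * s) * |W s|
          ≤ Real.exp (b * s) * Real.exp (b * s) * (C * (1 + |s|) ^ k) := h2
        _ = C * (1 + |s|) ^ k * Real.exp (b * s) * Real.exp (b * s) := by ring
    rw [Real.norm_eq_abs, Real.norm_eq_abs, Real.abs_exp, one_mul]
    calc |h s| ≤ C * (1 + |s|) ^ k * Real.exp (b * s) * Real.exp (b * s) := h1
      _ ≤ 1 * Real.exp (b * s) := by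
          exact mul_le_mul_of_nonneg_right hs (Real.exp_pos _).le
      _ = Real.exp (b * s) := one_mul _
  have hint : ∀ t : ℝ, IntegrableOn h (Set.Iic t) := by
    intro t
    refine LocallyIntegrableOn.integrableOn_of_isBigO_atBot
      (hh_cont.locallyIntegrable.locallyIntegrableOn _) hOb
      ⟨Set.Iic 0, Filter.Iic_mem_atBot 0, ?_⟩
    exact aux_integrableOn_exp_mul_Iic hb 0
  -- rewrite the integrand
  have hrw : ∀ t : ℝ, (fun s => Real.exp ((t - s) * β) * W s)
      = fun s => Real.exp (t * β) * h s := by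
    intro t; funext s
    rw [hh_def]
    rw [← mul_assoc, ← Real.exp_add]
    congr 2
    ring
  have hint' : ∀ t : ℝ,
      IntegrableOn (fun s => Real.exp ((t - s) * β) * W s) (Set.Iic t) := by
    intro t; rw [hrw t]; exact (hint t).const_mul _
  -- the primitive G and the function F
  set G : ℝ → ℝ := fun t => ∫ s in Set.Iic t, h s with hG_def
  have hGeq : ∀ t : ℝ, G t = G 0 + ∫ s in (0:ℝ)..t, h s := by
    intro t
    have := integral_Iic_sub_Iic (hint 0) (hint t)
    rw [hG_def]
    linarith [this]
  have hGd : ∀ t : ℝ, HasDerivAt G (h t) t := by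
    intro t
    have hfun : G = fun u => G 0 + ∫ s in (0:ℝ)..u, h s := funext hGeq
    rw [hfun]
    exact ((hh_cont.integral_hasStrictDerivAt 0 t).hasDerivAt).const_add (G 0)
  set F : ℝ → ℝ := fun t => Real.exp (t * β) * G t with hF_def
  have hFd : ∀ t : ℝ, HasDerivAt F (β * F t + W t) t := by
    intro t
    have he : HasDerivAt (fun u : ℝ => Real.exp (u * β)) (Real.exp (t * β) * β) t := by
      simpa using ((hasDerivAt_id t).mul_const β).exp
    have hmul := he.mul (hGd t)
    refine hmul.congr_deriv ?_
    symm
    rw [hh_def, hF_def]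
    have hone : Real.exp (t * β) * Real.exp (-(t * β)) = 1 := by
      rw [← Real.exp_add]; simp
    calc β * (Real.exp (t * β) * G t) + W t
        = Real.exp (t * β) * β * G t + (Real.exp (t * β) * Real.exp (-(t * β))) * W t := by
          rw [hone]; ring
      _ = Real.exp (t * β) * β * G t + Real.exp (t * β) * (Real.exp (-(t * β)) * W t) := by
          ring
  have hFcont : Continuous F := by
    have hdF : Differentiable ℝ F := fun t => (hFd t).differentiableAt
    exact hdF.continuous
  have hzF : ∀ t : ℝ, z t = σ * W t + σ * β * F t := by
    intro t
    rw [hz t]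
    congr 1
    rw [hrw t]
    rw [MeasureTheory.integral_const_mul]
  refine ⟨hint', ?_, ?_⟩
  · -- continuity
    have : z = fun t => σ * W t + σ * β * F t := funext hzF
    rw [this]
    exact (continuous_const.mul hW_cont).add (continuous_const.mul hFcont)
  · -- the Langevin equation
    intro t
    have hFTC : ∫ r in (0:ℝ)..t, (β * F r + W r) = F t - F 0 :=
      intervalIntegral.integral_eq_sub_of_hasDerivAt (fun x _ => hFd x)
        (((continuous_const.mul hFcont).add hW_cont).intervalIntegrable _ _)
    have hiW : IntervalIntegrable W volume 0 t := hW_cont.intervalIntegrable _ _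
    have hiF : IntervalIntegrable F volume 0 t := hFcont.intervalIntegrable _ _
    have h2 : ∫ r in (0:ℝ)..t, (β * F r + W r)
        = β * (∫ r in (0:ℝ)..t, F r) + ∫ r in (0:ℝ)..t, W r := by
      rw [intervalIntegral.integral_add (hiF.const_mul β) hiW,
        intervalIntegral.integral_const_mul]
    have hzint : ∫ r in (0:ℝ)..t, z r
        = σ * (∫ r in (0:ℝ)..t, W r) + σ * β * (∫ r in (0:ℝ)..t, F r) := by
      rw [intervalIntegral.integral_congr (g := fun r => σ * W r + σ * β * F r)
        (fun r _ => hzF r)]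
      rw [intervalIntegral.integral_add (hiW.const_mul σ) (hiF.const_mul (σ * β)),
        intervalIntegral.integral_const_mul, intervalIntegral.integral_const_mul]
    have hkey : β * (∫ r in (0:ℝ)..t, F r) + (∫ r in (0:ℝ)..t, W r) = F t - F 0 := by
      rw [← h2]; exact hFTC
    rw [hzF t, hzF 0, hzint]
    linear_combination (-(σ * β)) * hkey
end

section
/- Let l > 0, γ ∈ ℝ, and let i₁, i₂ ≥ 1 be integers with i₁ ≠ i₂ and n = |i₁ − i₂|. With e_k(x) = √(2/l)·sin(kπx/l), one has −γ ∫_0^l e_{i₁}(x) · (d/dx) e_{i₂}(x) · e_n(x) dx = −γ i₂ π · sgn(i₁ − i₂) / (√2 · l^{3/2}). -/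
open MeasureTheory Real intervalIntegral

lemma trig_id (A B C : ℝ) :
    Real.sin A * Real.cos B * Real.sin C
      = (Real.cos (A - C + B) + Real.cos (A - C - B)
          - Real.cos (A + C + B) - Real.cos (A + C - B)) / 4 := by
  simp [Real.cos_add, Real.cos_sub, Real.sin_add, Real.sin_sub]
  ring

lemma integral_cos_int (l : ℝ) (hl : 0 < l) (m : ℤ) :
    (∫ x in (0:ℝ)..l, Real.cos ((m : ℝ) * Real.pi * x / l))
      = if m = 0 then l else 0 := by
  by_cases hm : m = 0
  · simp [hm]
  · have hc : (m : ℝ) * Real.pi / l ≠ 0 := by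
      have : (m : ℝ) ≠ 0 := Int.cast_ne_zero.mpr hm
      positivity
    have h1 : (∫ x in (0:ℝ)..l, Real.cos ((m : ℝ) * Real.pi * x / l))
        = ∫ x in (0:ℝ)..l, Real.cos (((m : ℝ) * Real.pi / l) * x) := by
      congr 1; ext x; ring_nf
    rw [h1, integral_comp_mul_left Real.cos hc, integral_cos]
    have : (m : ℝ) * Real.pi / l * l = m * Real.pi := by field_simp
    simp [this, Real.sin_int_mul_pi, hm]

/-- Burgers nonlinear interaction coefficient for `n = |i₁ - i₂|`,
`i₁ ≠ i₂`: with `e_k x = √(2/l) sin (kπx/l)`,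
`-γ ∫_0^l e_{i₁} (e_{i₂})′ e_n dx = -γ i₂ π sgn (i₁ - i₂) / (√2 l^{3/2})`. -/
theorem burgers_interaction_diff
    (l γ : ℝ) (hl : 0 < l) (i₁ i₂ n : ℕ) (hi₁ : 1 ≤ i₁) (hi₂ : 1 ≤ i₂)
    (hne : i₁ ≠ i₂) (hn : (n : ℤ) = |(i₁ : ℤ) - (i₂ : ℤ)|)
    (e : ℕ → ℝ → ℝ)
    (he : ∀ k x, e k x = Real.sqrt (2 / l) * Real.sin (k * Real.pi * x / l)) :
    -γ * ∫ x in (0:ℝ)..l, e i₁ x * deriv (e i₂) x * e n x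
      = -(γ * i₂ * Real.pi * (((i₁ : ℤ) - (i₂ : ℤ)).sign : ℝ))
        / (Real.sqrt 2 * l ^ ((3:ℝ)/2)) := by
  have hl' : l ≠ 0 := ne_of_gt hl
  set c := Real.sqrt (2 / l) with hc
  have hfun : e i₂ = fun y => c * Real.sin ((i₂:ℝ) * π / l * y) := by
    funext y; rw [he]; congr 1; ring
  have hderiv : ∀ x, deriv (e i₂) x
      = c * ((i₂:ℝ) * π / l) * Real.cos ((i₂:ℝ) * π * x / l) := by
    intro x
    have harg : (i₂:ℝ) * π / l * x = (i₂:ℝ) * π * x / l := by ring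
    have h := (((hasDerivAt_id x).const_mul ((i₂:ℝ) * π / l)).sin).const_mul c
    simp only [id_eq, mul_one] at h
    rw [harg] at h
    rw [hfun]
    convert h.deriv using 1
    ring
  set m₁ : ℤ := (i₁:ℤ) - n + i₂ with hm₁
  set m₂ : ℤ := (i₁:ℤ) - n - i₂ with hm₂
  set m₃ : ℤ := (i₁:ℤ) + n + i₂ with hm₃
  set m₄ : ℤ := (i₁:ℤ) + n - i₂ with hm₄
  set K : ℝ := c ^ 3 * ((i₂:ℝ) * π / l) / 4 with hK
  have hpt : ∀ x ∈ Set.uIcc (0:ℝ) l, e i₁ x * deriv (e i₂) x * e n x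
      = K * (Real.cos ((m₁:ℝ) * π * x / l) + Real.cos ((m₂:ℝ) * π * x / l)
          - Real.cos ((m₃:ℝ) * π * x / l) - Real.cos ((m₄:ℝ) * π * x / l)) := by
    intro x _
    rw [he, he, hderiv]
    have hid := trig_id ((i₁:ℝ) * π * x / l) ((i₂:ℝ) * π * x / l) ((n:ℝ) * π * x / l)
    have e1 : (i₁:ℝ)*π*x/l - (n:ℝ)*π*x/l + (i₂:ℝ)*π*x/l = (m₁:ℝ)*π*x/l := by
      rw [hm₁]; push_cast; ring
    have e2 : (i₁:ℝ)*π*x/l - (n:ℝ)*π*x/l - (i₂:ℝ)*π*x/l = (m₂:ℝ)*π*x/l := by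
      rw [hm₂]; push_cast; ring
    have e3 : (i₁:ℝ)*π*x/l + (n:ℝ)*π*x/l + (i₂:ℝ)*π*x/l = (m₃:ℝ)*π*x/l := by
      rw [hm₃]; push_cast; ring
    have e4 : (i₁:ℝ)*π*x/l + (n:ℝ)*π*x/l - (i₂:ℝ)*π*x/l = (m₄:ℝ)*π*x/l := by
      rw [hm₄]; push_cast; ring
    rw [e1, e2, e3, e4] at hid
    rw [hK]
    calc c * Real.sin ((i₁:ℝ)*π*x/l) * (c * ((i₂:ℝ)*π/l) * Real.cos ((i₂:ℝ)*π*x/l))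
          * (c * Real.sin ((n:ℝ)*π*x/l))
        = c^3 * ((i₂:ℝ)*π/l) *
          (Real.sin ((i₁:ℝ)*π*x/l) * Real.cos ((i₂:ℝ)*π*x/l) * Real.sin ((n:ℝ)*π*x/l)) := by
          ring
      _ = _ := by rw [hid]; ring
  rw [intervalIntegral.integral_congr hpt]
  have cont : ∀ m : ℤ, IntervalIntegrable
      (fun x => Real.cos ((m:ℝ) * π * x / l)) volume 0 l := fun m =>
    (Real.continuous_cos.comp ((continuous_const.mul continuous_id).div_const l)).intervalIntegrable _ _
  rw [intervalIntegral.integral_const_mul,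
    intervalIntegral.integral_sub (((cont m₁).add (cont m₂)).sub (cont m₃)) (cont m₄),
    intervalIntegral.integral_sub ((cont m₁).add (cont m₂)) (cont m₃),
    intervalIntegral.integral_add (cont m₁) (cont m₂),
    integral_cos_int l hl, integral_cos_int l hl, integral_cos_int l hl, integral_cos_int l hl]
  have h2 : (Real.sqrt 2) ^ 2 = 2 := Real.sq_sqrt (by norm_num)
  have hL : (Real.sqrt l) ^ 2 = l := Real.sq_sqrt hl.le
  have hs2 : Real.sqrt 2 ≠ 0 := by positivity
  have hsl : Real.sqrt l ≠ 0 := by positivity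
  have hcv : c = Real.sqrt 2 / Real.sqrt l := Real.sqrt_div (by norm_num) l
  have hl32 : l ^ ((3:ℝ)/2) = l * Real.sqrt l := by
    rw [show (3:ℝ)/2 = 1 + 1/2 by norm_num, Real.rpow_add hl, Real.rpow_one,
      ← Real.sqrt_eq_rpow]
  have halg : K * l = (i₂:ℝ) * π / (Real.sqrt 2 * l ^ ((3:ℝ)/2)) := by
    rw [hK, hcv, hl32, div_pow]
    field_simp
    rw [show Real.sqrt 2 ^ 4 = (Real.sqrt 2 ^ 2) ^ 2 by ring, h2, hL]
    ring
  rcases lt_or_gt_of_ne hne with h | h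
  · -- i₁ < i₂, n = i₂ - i₁
    have hnn : (n:ℤ) = (i₂:ℤ) - i₁ := by
      rw [hn, abs_of_neg (show (i₁:ℤ) - (i₂:ℤ) < 0 by omega)]; ring
    have s1 : m₁ ≠ 0 := by omega
    have s2 : m₂ ≠ 0 := by omega
    have s3 : m₃ ≠ 0 := by omega
    have s4 : m₄ = 0 := by omega
    have hsg : (((i₁:ℤ) - (i₂:ℤ)).sign : ℝ) = -1 := by
      have : ((i₁:ℤ) - (i₂:ℤ)).sign = -1 := Int.sign_eq_neg_one_of_neg (by omega)
      rw [this]; norm_num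
    rw [if_neg s1, if_neg s2, if_neg s3, if_pos s4, hsg]
    linear_combination γ * halg
  · have hnn : (n:ℤ) = (i₁:ℤ) - i₂ := by
      rw [hn, abs_of_nonneg (show (0:ℤ) ≤ (i₁:ℤ) - (i₂:ℤ) by omega)]
    have s1 : m₁ ≠ 0 := by omega
    have s2 : m₂ = 0 := by omega
    have s3 : m₃ ≠ 0 := by omega
    have s4 : m₄ ≠ 0 := by omega
    have hsg : (((i₁:ℤ) - (i₂:ℤ)).sign : ℝ) = 1 := by
      have : ((i₁:ℤ) - (i₂:ℤ)).sign = 1 := Int.sign_eq_one_of_pos (by omega)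
      rw [this]; norm_num
    rw [if_neg s1, if_pos s2, if_neg s3, if_neg s4, hsg]
    linear_combination (-γ) * halg
end

section
/- Let l > 0, γ ∈ ℝ, N ≥ 2 an integer, and a₁, …, a_N ∈ ℝ. With e_k(x) = √(2/l)·sin(kπx/l) and u(x) := Σ_{k=1}^N a_k e_k(x), one has ∫_0^l (−γ) u(x) u′(x) e₁(x) dx = (γπ/(√2 · l^{3/2})) · Σ_{j=1}^{N−1} a_j a_{j+1}. -/
open MeasureTheory Real intervalIntegral



lemma trig_id_s16 (p q r : ℝ) : sin p * cos q * sin r =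
    (cos (p - r - q) + cos (p - r + q) - cos (p + r - q) - cos (p + r + q))/4 := by
  simp only [Real.cos_sub, Real.cos_add, Real.sin_sub, Real.sin_add]; ring

lemma cos_int_integral (l : ℝ) (hl : 0 < l) (n : ℤ) :
    ∫ x in (0:ℝ)..l, Real.cos (n * π * x / l) = if n = 0 then l else 0 := by
  rcases eq_or_ne n 0 with h | h
  · simp [h]
  · have hc : ((n:ℝ) * π / l) ≠ 0 := by
      apply div_ne_zero (mul_ne_zero (Int.cast_ne_zero.mpr h) Real.pi_ne_zero) hl.ne'
    have hd : ∀ x ∈ Set.uIcc (0:ℝ) l, HasDerivAt (fun y => Real.sin ((n:ℝ) * π * y / l) / ((n:ℝ) * π / l)) (Real.cos ((n:ℝ) * π * x / l)) x := by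
      intro x _
      have h1 : HasDerivAt (fun y : ℝ => (n:ℝ) * π * y / l) ((n:ℝ) * π / l) x := by
        simpa using ((hasDerivAt_id x).const_mul ((n:ℝ) * π)).div_const l
      have h2 := (h1.sin).div_const ((n:ℝ) * π / l)
      simpa [mul_div_cancel_right₀ _ hc] using h2
    have hint : IntervalIntegrable (fun x => Real.cos ((n:ℝ) * π * x / l)) MeasureTheory.volume 0 l :=
      (by continuity : Continuous fun x : ℝ => Real.cos ((n:ℝ) * π * x / l)).intervalIntegrable _ _
    rw [intervalIntegral.integral_eq_sub_of_hasDerivAt hd hint]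
    have : (n:ℝ) * π * l / l = n * π := by field_simp
    simp [h, this, Real.sin_int_mul_pi]

lemma key_integral (l : ℝ) (hl : 0 < l) (j k : ℕ) (hj : 1 ≤ j) (hk : 1 ≤ k) :
    ∫ x in (0:ℝ)..l, sin ((j:ℝ) * π * x / l) * cos ((k:ℝ) * π * x / l) * sin (π * x / l)
      = if j = k + 1 then l/4 else if k = j + 1 then -(l/4) else 0 := by
  have hpt : ∀ x : ℝ, sin ((j:ℝ) * π * x / l) * cos ((k:ℝ) * π * x / l) * sin (π * x / l)
      = (cos ((((j:ℤ) - 1 - k : ℤ):ℝ) * π * x / l) + cos ((((j:ℤ) - 1 + k : ℤ):ℝ) * π * x / l)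
        - cos ((((j:ℤ) + 1 - k : ℤ):ℝ) * π * x / l) - cos ((((j:ℤ) + 1 + k : ℤ):ℝ) * π * x / l))/4 := by
    intro x
    rw [trig_id_s16]
    push_cast
    ring_nf
  have hI : ∀ n : ℤ, IntervalIntegrable (fun x => Real.cos ((n:ℝ) * π * x / l)) MeasureTheory.volume 0 l :=
    fun n => (by continuity : Continuous fun x : ℝ => Real.cos ((n:ℝ) * π * x / l)).intervalIntegrable _ _
  simp only [hpt]
  rw [intervalIntegral.integral_div, intervalIntegral.integral_sub (((hI _).add (hI _)).sub (hI _)) (hI _),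
    intervalIntegral.integral_sub ((hI _).add (hI _)) (hI _), intervalIntegral.integral_add (hI _) (hI _),
    cos_int_integral l hl, cos_int_integral l hl, cos_int_integral l hl, cos_int_integral l hl]
  have h2 : ((j:ℤ) - 1 + k) ≠ 0 := by omega
  have h4 : ((j:ℤ) + 1 + k) ≠ 0 := by omega
  rcases eq_or_ne j (k+1) with h | h
  · have h1 : ((j:ℤ) - 1 - k) = 0 := by omega
    have h3 : ((j:ℤ) + 1 - k) ≠ 0 := by omega
    rw [if_pos h1, if_neg h2, if_neg h3, if_neg h4, if_pos h]; ring
  · rcases eq_or_ne k (j+1) with h' | h'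
    · have h1 : ((j:ℤ) - 1 - k) ≠ 0 := by omega
      have h3 : ((j:ℤ) + 1 - k) = 0 := by omega
      rw [if_neg h1, if_neg h2, if_pos h3, if_neg h4, if_neg h, if_pos h']; ring
    · have h1 : ((j:ℤ) - 1 - k) ≠ 0 := by omega
      have h3 : ((j:ℤ) + 1 - k) ≠ 0 := by omega
      simp [h, h', h1, h2, h3, h4]


lemma sum_eval (N : ℕ) (hN : 2 ≤ N) (a : ℕ → ℝ) (b : ℝ) :
    ∑ j ∈ Finset.Icc 1 N, ∑ k ∈ Finset.Icc 1 N,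
      a j * a k * (k:ℝ) * (if j = k + 1 then b else if k = j + 1 then -b else 0)
    = -b * ∑ m ∈ Finset.Icc 1 (N-1), a m * a (m+1) := by
  have hinner : ∀ j ∈ Finset.Icc 1 N, (∑ k ∈ Finset.Icc 1 N,
      a j * a k * (k:ℝ) * (if j = k + 1 then b else if k = j + 1 then -b else 0))
    = (if j - 1 ∈ Finset.Icc 1 N then a j * a (j-1) * ((j-1:ℕ):ℝ) * b else 0)
      + (if j + 1 ∈ Finset.Icc 1 N then -(a j * a (j+1) * ((j+1:ℕ):ℝ) * b) else 0) := by
    intro j hj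
    rw [Finset.mem_Icc] at hj
    rw [← Finset.sum_ite_eq' (Finset.Icc 1 N) (j-1) (fun k => a j * a k * (k:ℝ) * b),
        ← Finset.sum_ite_eq' (Finset.Icc 1 N) (j+1) (fun k => -(a j * a k * (k:ℝ) * b)),
        ← Finset.sum_add_distrib]
    apply Finset.sum_congr rfl
    intro k hk
    rw [Finset.mem_Icc] at hk
    rcases eq_or_ne j (k+1) with h | h
    · rw [if_pos h, if_pos (by omega : k = j - 1), if_neg (by omega : ¬ k = j + 1)]; ring
    · rcases eq_or_ne k (j+1) with h' | h'
      · rw [if_neg h, if_pos h', if_neg (by omega : ¬ k = j - 1), if_pos h']; ring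
      · rw [if_neg h, if_neg h', if_neg (by omega : ¬ k = j - 1), if_neg h']; ring
  rw [Finset.sum_congr rfl hinner, Finset.sum_add_distrib]
  have e1 : (∑ j ∈ Finset.Icc 1 N, if j - 1 ∈ Finset.Icc 1 N then a j * a (j-1) * ((j-1:ℕ):ℝ) * b else 0)
      = ∑ m ∈ Finset.Icc 1 (N-1), a (m+1) * a m * ((m:ℕ):ℝ) * b := by
    rw [← Finset.sum_filter]
    have hf : (Finset.Icc 1 N).filter (fun j => j - 1 ∈ Finset.Icc 1 N) = Finset.Icc 2 N := by
      ext j; simp only [Finset.mem_filter, Finset.mem_Icc]; omega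
    rw [hf]
    apply Finset.sum_nbij' (fun j => j - 1) (fun m => m + 1)
    · intro j hj; rw [Finset.mem_Icc] at *; omega
    · intro m hm; rw [Finset.mem_Icc] at *; omega
    · intro j hj; rw [Finset.mem_Icc] at hj; omega
    · intro m hm; rfl
    · intro j hj; rw [Finset.mem_Icc] at hj
      have : j - 1 + 1 = j := by omega
      rw [this]
  have e2 : (∑ j ∈ Finset.Icc 1 N, if j + 1 ∈ Finset.Icc 1 N then -(a j * a (j+1) * ((j+1:ℕ):ℝ) * b) else 0)
      = ∑ m ∈ Finset.Icc 1 (N-1), -(a m * a (m+1) * ((m+1:ℕ):ℝ) * b) := by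
    rw [← Finset.sum_filter]
    congr 1
    ext j; simp only [Finset.mem_filter, Finset.mem_Icc]; omega
  rw [e1, e2, ← Finset.sum_add_distrib, Finset.mul_sum]
  apply Finset.sum_congr rfl
  intro m hm
  push_cast
  ring

lemma integral_sum1 (t : Finset ℕ) (F : ℕ → ℝ → ℝ)
    (hF : ∀ k, Continuous (F k)) (a b : ℝ) :
    (∫ x in a..b, ∑ k ∈ t, F k x) = ∑ k ∈ t, ∫ x in a..b, F k x :=
  intervalIntegral.integral_finset_sum (fun k _ => (hF k).intervalIntegrable a b)

lemma integral_double_sum (s t : Finset ℕ) (F : ℕ → ℕ → ℝ → ℝ)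
    (hF : ∀ j k, Continuous (F j k)) (a b : ℝ) :
    (∫ x in a..b, ∑ j ∈ s, ∑ k ∈ t, F j k x)
      = ∑ j ∈ s, ∑ k ∈ t, ∫ x in a..b, F j k x := by
  rw [integral_sum1 s (fun j x => ∑ k ∈ t, F j k x)
      (fun j => continuous_finset_sum _ (fun k _ => hF j k)) a b]
  exact Finset.sum_congr rfl fun j _ => integral_sum1 t (F j) (hF j) a b

set_option maxHeartbeats 1000000 in
/-- Projection onto the first mode of the Burgers nonlinearity for a
trigonometric polynomial `u = Σ_{k=1}^N a_k e_k`: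
`∫_0^l (-γ) u u′ e₁ dx = (γπ/(√2 l^{3/2})) Σ_{j=1}^{N-1} a_j a_{j+1}`. -/
theorem burgers_projection_first_mode
    (l γ : ℝ) (hl : 0 < l) (N : ℕ) (hN : 2 ≤ N) (a : ℕ → ℝ)
    (e : ℕ → ℝ → ℝ)
    (he : ∀ k x, e k x = Real.sqrt (2 / l) * Real.sin (k * Real.pi * x / l))
    (u : ℝ → ℝ) (hu : ∀ x, u x = ∑ k ∈ Finset.Icc 1 N, a k * e k x) :
    ∫ x in (0:ℝ)..l, (-γ) * u x * deriv u x * e 1 x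
      = (γ * Real.pi / (Real.sqrt 2 * l ^ ((3:ℝ)/2)))
        * ∑ j ∈ Finset.Icc 1 (N - 1), a j * a (j + 1) := by
  set C := Real.sqrt (2 / l) with hC
  have hu' : u = fun x => ∑ k ∈ Finset.Icc 1 N, a k * (C * Real.sin ((k:ℝ) * π * x / l)) := by
    funext x
    rw [hu]
    exact Finset.sum_congr rfl fun k _ => by rw [he]
  have hderiv : ∀ x, HasDerivAt u
      (∑ k ∈ Finset.Icc 1 N, a k * (C * (Real.cos ((k:ℝ) * π * x / l) * ((k:ℝ) * π / l)))) x := by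
    intro x
    rw [hu']
    apply HasDerivAt.fun_sum
    intro k _
    have h1 : HasDerivAt (fun y : ℝ => (k:ℝ) * π * y / l) ((k:ℝ) * π / l) x := by
      simpa using ((hasDerivAt_id x).const_mul ((k:ℝ) * π)).div_const l
    exact (h1.sin.const_mul C).const_mul (a k)
  have hpt : ∀ x : ℝ, (-γ) * u x * deriv u x * e 1 x
      = ∑ j ∈ Finset.Icc 1 N, ∑ k ∈ Finset.Icc 1 N,
          ((-γ) * C^3 * π / l) * (a j * a k * (k:ℝ))
            * (sin ((j:ℝ) * π * x / l) * cos ((k:ℝ) * π * x / l) * sin (π * x / l)) := by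
    intro x
    rw [hu x, (hderiv x).deriv, he 1 x]
    simp only [he, Nat.cast_one, one_mul]
    simp only [Finset.mul_sum, Finset.sum_mul]
    rw [Finset.sum_comm]
    apply Finset.sum_congr rfl
    intro j _
    apply Finset.sum_congr rfl
    intro k _
    ring
  have hcont : ∀ j k : ℕ, Continuous fun x : ℝ =>
      ((-γ) * C^3 * π / l) * (a j * a k * (k:ℝ))
        * (sin ((j:ℝ) * π * x / l) * cos ((k:ℝ) * π * x / l) * sin (π * x / l)) := by
    intro j k; fun_prop
  rw [intervalIntegral.integral_congr (g := fun x => ∑ j ∈ Finset.Icc 1 N, ∑ k ∈ Finset.Icc 1 N,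
      ((-γ) * C^3 * π / l) * (a j * a k * (k:ℝ))
        * (sin ((j:ℝ) * π * x / l) * cos ((k:ℝ) * π * x / l) * sin (π * x / l)))
      (fun x _ => hpt x)]
  rw [integral_double_sum (Finset.Icc 1 N) (Finset.Icc 1 N) _ hcont 0 l]
  have : ∀ j ∈ Finset.Icc 1 N, ∀ k ∈ Finset.Icc 1 N, (∫ x in (0:ℝ)..l,
      ((-γ) * C^3 * π / l) * (a j * a k * (k:ℝ))
        * (sin ((j:ℝ) * π * x / l) * cos ((k:ℝ) * π * x / l) * sin (π * x / l)))
      = ((-γ) * C^3 * π / l) *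
          (a j * a k * (k:ℝ) * (if j = k + 1 then l/4 else if k = j + 1 then -(l/4) else 0)) := by
    intro j hj k hk
    rw [Finset.mem_Icc] at hj hk
    rw [intervalIntegral.integral_const_mul, key_integral l hl j k hj.1 hk.1]
    ring
  rw [Finset.sum_congr rfl (fun j hj => Finset.sum_congr rfl (fun k hk => this j hj k hk))]
  simp only [← Finset.mul_sum]
  rw [sum_eval N hN a (l/4)]
  -- now scalar arithmetic
  have hl32 : l ^ ((3:ℝ)/2) = Real.sqrt l ^ 3 := by
    rw [Real.sqrt_eq_rpow, ← Real.rpow_natCast (l ^ ((1:ℝ)/2)) 3, ← Real.rpow_mul hl.le]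
    norm_num
  have hCl : C = Real.sqrt 2 / Real.sqrt l := by
    rw [hC, Real.sqrt_div (by norm_num : (0:ℝ) ≤ 2)]
  have hsl : (0:ℝ) < Real.sqrt l := Real.sqrt_pos.mpr hl
  have h2 : Real.sqrt 2 ^ 2 = 2 := Real.sq_sqrt (by norm_num)
  have hll : Real.sqrt l ^ 2 = l := Real.sq_sqrt hl.le
  have h2p : (0:ℝ) < Real.sqrt 2 := Real.sqrt_pos.mpr (by norm_num)
  rw [← mul_assoc]
  congr 1
  rw [hl32, hCl]
  field_simp
  ring_nf
  linear_combination (γ * (Real.sqrt 2 ^ 2 + 2)) * h2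
end
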